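/- In the heterogeneous SIR model with distributed infectivity reduced to ODEs: S' = -β̄(t) S I, I' = β̄(t) S I - γ I, β̄'(t) = S σ²(t) (variance equation with g = S), if two solutions share the same initial data S₀, I₀, β̄(0), γ but σ₁²(0) > σ₂²(0), then S₁''(0) < S₂''(0), and hence there exists ε > 0 such that S₁(t) < S₂(t) for all t ∈ (0, ε). -/

import Mathlib

open Set

/-- Heterogeneity in infectivity: if two reduced SIR systems
S' = -β̄SI, I' = β̄SI - γI, β̄' = Sσ² share initial data but σ₁²(0) > σ₂²(0),
then S₁ < S₂ on a right neighborhood of 0. -/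
theorem infectivity_variance_comparison
    (S₁ I₁ β₁ σ₁ S₂ I₂ β₂ σ₂ : ℝ → ℝ) (γ : ℝ) (hγ : 0 ≤ γ)
    (hS₁smooth : ContDiff ℝ 2 S₁) (hS₂smooth : ContDiff ℝ 2 S₂)
    (hI₁smooth : ContDiff ℝ 1 I₁) (hI₂smooth : ContDiff ℝ 1 I₂)
    (hβ₁smooth : ContDiff ℝ 1 β₁) (hβ₂smooth : ContDiff ℝ 1 β₂)
    (hσ₁cont : Continuous σ₁) (hσ₂cont : Continuous σ₂)
    (hS₁' : ∀ t, deriv S₁ t = -(β₁ t * S₁ t * I₁ t))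
    (hI₁' : ∀ t, deriv I₁ t = β₁ t * S₁ t * I₁ t - γ * I₁ t)
    (hβ₁' : ∀ t, deriv β₁ t = S₁ t * σ₁ t)
    (hS₂' : ∀ t, deriv S₂ t = -(β₂ t * S₂ t * I₂ t))
    (hI₂' : ∀ t, deriv I₂ t = β₂ t * S₂ t * I₂ t - γ * I₂ t)
    (hβ₂' : ∀ t, deriv β₂ t = S₂ t * σ₂ t)
    (hS0 : S₁ 0 = S₂ 0) (hI0 : I₁ 0 = I₂ 0) (hβ0 : β₁ 0 = β₂ 0)
    (hS0pos : 0 < S₁ 0) (hI0pos : 0 < I₁ 0)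
    (hσ0 : σ₂ 0 < σ₁ 0) :
    ∃ ε > 0, ∀ t ∈ Ioo (0 : ℝ) ε, S₁ t < S₂ t := by
  have hS₁d : Differentiable ℝ S₁ := hS₁smooth.differentiable (by norm_num)
  have hS₂d : Differentiable ℝ S₂ := hS₂smooth.differentiable (by norm_num)
  have hI₁d : Differentiable ℝ I₁ := hI₁smooth.differentiable one_ne_zero
  have hI₂d : Differentiable ℝ I₂ := hI₂smooth.differentiable one_ne_zero
  have hβ₁d : Differentiable ℝ β₁ := hβ₁smooth.differentiable one_ne_zero
  have hβ₂d : Differentiable ℝ β₂ := hβ₂smooth.differentiable one_ne_zero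
  -- second-derivative expressions
  set d₁ : ℝ → ℝ := fun t =>
    -((S₁ t * σ₁ t * S₁ t + β₁ t * -(β₁ t * S₁ t * I₁ t)) * I₁ t
      + β₁ t * S₁ t * (β₁ t * S₁ t * I₁ t - γ * I₁ t)) with hd₁def
  set d₂ : ℝ → ℝ := fun t =>
    -((S₂ t * σ₂ t * S₂ t + β₂ t * -(β₂ t * S₂ t * I₂ t)) * I₂ t
      + β₂ t * S₂ t * (β₂ t * S₂ t * I₂ t - γ * I₂ t)) with hd₂def
  have H₁ : ∀ t, HasDerivAt (fun y => -(β₁ y * S₁ y * I₁ y)) (d₁ t) t := by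
    intro t
    have hβ : HasDerivAt β₁ (S₁ t * σ₁ t) t := hβ₁' t ▸ (hβ₁d t).hasDerivAt
    have hS : HasDerivAt S₁ (-(β₁ t * S₁ t * I₁ t)) t := hS₁' t ▸ (hS₁d t).hasDerivAt
    have hI : HasDerivAt I₁ (β₁ t * S₁ t * I₁ t - γ * I₁ t) t := hI₁' t ▸ (hI₁d t).hasDerivAt
    exact ((hβ.mul hS).mul hI).neg
  have H₂ : ∀ t, HasDerivAt (fun y => -(β₂ y * S₂ y * I₂ y)) (d₂ t) t := by
    intro t
    have hβ : HasDerivAt β₂ (S₂ t * σ₂ t) t := hβ₂' t ▸ (hβ₂d t).hasDerivAt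
    have hS : HasDerivAt S₂ (-(β₂ t * S₂ t * I₂ t)) t := hS₂' t ▸ (hS₂d t).hasDerivAt
    have hI : HasDerivAt I₂ (β₂ t * S₂ t * I₂ t - γ * I₂ t) t := hI₂' t ▸ (hI₂d t).hasDerivAt
    exact ((hβ.mul hS).mul hI).neg
  set g : ℝ → ℝ := fun t => d₂ t - d₁ t with hgdef
  have hcS₁ := hS₁d.continuous
  have hcS₂ := hS₂d.continuous
  have hcI₁ := hI₁d.continuous
  have hcI₂ := hI₂d.continuous
  have hcβ₁ := hβ₁d.continuous
  have hcβ₂ := hβ₂d.continuous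
  have hgcont : Continuous g := by
    simp only [hgdef, hd₁def, hd₂def]
    fun_prop
  have hg0 : 0 < g 0 := by
    have key : g 0 = S₁ 0 * S₁ 0 * I₁ 0 * (σ₁ 0 - σ₂ 0) := by
      simp only [hgdef, hd₁def, hd₂def, ← hS0, ← hI0, ← hβ0]
      ring
    rw [key]
    have := sub_pos.mpr hσ0
    positivity
  -- find ε where g > 0
  have h1 : ∀ᶠ t in nhds (0 : ℝ), 0 < g t :=
    (hgcont.tendsto 0).eventually (eventually_gt_nhds hg0)
  obtain ⟨ε, hε, hball⟩ := Metric.eventually_nhds_iff.mp h1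
  refine ⟨ε, hε, ?_⟩
  -- φ = deriv S₂ - deriv S₁
  set φ : ℝ → ℝ := fun t => deriv S₂ t - deriv S₁ t with hφdef
  have hφeq : φ = fun y => -(β₂ y * S₂ y * I₂ y) - -(β₁ y * S₁ y * I₁ y) :=
    funext fun y => by show deriv S₂ y - deriv S₁ y = _; rw [hS₂' y, hS₁' y]
  have hφD : ∀ t, HasDerivAt φ (g t) t := by
    intro t; rw [hφeq]; exact (H₂ t).sub (H₁ t)
  have hφcont : Continuous φ :=
    continuous_iff_continuousAt.mpr fun t => (hφD t).continuousAt
  have hφ0 : φ 0 = 0 := by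
    simp only [hφdef, hS₂' 0, hS₁' 0, ← hS0, ← hI0, ← hβ0]; ring
  have hφmono : StrictMonoOn φ (Icc 0 ε) := by
    apply strictMonoOn_of_deriv_pos (convex_Icc 0 ε) hφcont.continuousOn
    intro t ht
    rw [interior_Icc] at ht
    rw [(hφD t).deriv]
    exact hball (by simp [abs_of_pos ht.1]; exact ht.2)
  have hφpos : ∀ t ∈ Ioo (0:ℝ) ε, 0 < φ t := by
    intro t ht
    have := hφmono (left_mem_Icc.mpr hε.le) ⟨ht.1.le, ht.2.le⟩ ht.1
    rwa [hφ0] at this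
  -- ψ = S₂ - S₁
  set ψ : ℝ → ℝ := fun t => S₂ t - S₁ t with hψdef
  have hψD : ∀ t, HasDerivAt ψ (φ t) t := fun t =>
    ((hS₂d t).hasDerivAt).sub ((hS₁d t).hasDerivAt)
  have hψmono : StrictMonoOn ψ (Icc 0 ε) := by
    apply strictMonoOn_of_deriv_pos (convex_Icc 0 ε)
      (continuous_iff_continuousAt.mpr fun t => (hψD t).continuousAt).continuousOn
    intro t ht
    rw [interior_Icc] at ht
    rw [(hψD t).deriv]
    exact hφpos t ht
  intro t ht
  have h := hψmono (left_mem_Icc.mpr hε.le) ⟨ht.1.le, ht.2.le⟩ ht.1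
  have hψ0 : ψ 0 = 0 := by simp [hψdef, hS0]
  rw [hψ0] at h
  simpa [hψdef, sub_pos] using h
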